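/- General bounds on the minimal family size (Corollary 3.5): every c-ideal family of hash functions has cardinality at least C(u,n)/M_c, and there exists a c-ideal family of cardinality at most (C(u,n)/M_c) · n · ln(u); equivalently, writing p := M_c/C(u,n) for the probability that a fixed load-maximizing hash function is c-ideal for a uniformly random S ∈ S_n, the minimal size H_c of a c-ideal family satisfies 1/p ≤ H_c ≤ (n·ln u)/p. -/

import Mathlib

open Finset

/-- The maximum cell load of hash function `h` on key set `S`. -/
def cost {u m : ℕ} (h : Fin u → Fin m) (S : Finset (Fin u)) : ℕ :=
  Finset.univ.sup fun k : Fin m => (S.filter fun x => h x = k).card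

/-- The collection of all `n`-element subsets of the universe `Fin u`. -/
def Sn (u n : ℕ) : Finset (Finset (Fin u)) :=
  Finset.univ.powersetCard n

/-- The maximal number of `n`-element sets any single hash function maps `c`-ideally
(i.e., with maximum cell load at most `d`). -/
def Mc (u m n d : ℕ) : ℕ :=
  Finset.univ.sup fun h : Fin u → Fin m =>
    ((Sn u n).filter fun S => cost h S ≤ d).card

/-- A family `H` of hash functions is `c`-ideal if every `n`-element set of keys is
hashed with maximum cell load at most `d` by some member of `H`. -/
def IsIdealFamily (u m n d : ℕ) (H : Finset (Fin u → Fin m)) : Prop :=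
  ∀ S ∈ Sn u n, ∃ h ∈ H, cost h S ≤ d

lemma cost_comp_perm {u m : ℕ} (h : Fin u → Fin m) (π : Equiv.Perm (Fin u))
    (S : Finset (Fin u)) : cost (h ∘ π) S = cost h (S.image π) := by
  unfold cost
  congr 1; funext k
  rw [Finset.filter_image, Finset.card_image_of_injective _ π.injective]
  rfl

lemma exists_perm_image {α : Type*} [Fintype α] [DecidableEq α] {T T' : Finset α}
    (h : T.card = T'.card) : ∃ σ : Equiv.Perm α, T.image σ = T' := by
  have hc : (Tᶜ : Finset α).card = (T'ᶜ : Finset α).card := by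
    simp [Finset.card_compl, h]
  let e' : {x // x ∈ T} ≃ {x // x ∈ T'} := Finset.equivOfCardEq h
  let f : ((Tᶜ : Finset α) : Finset α) ≃ ((T'ᶜ : Finset α) : Finset α) :=
    Finset.equivOfCardEq hc
  let f' : {x // ¬ x ∈ T} ≃ {x // ¬ x ∈ T'} :=
    ((Equiv.subtypeEquivRight (fun x => by simp)).trans f).trans
      (Equiv.subtypeEquivRight (fun x => by simp))
  refine ⟨Equiv.subtypeCongr e' f', ?_⟩
  apply Finset.eq_of_subset_of_card_le
  · intro y hy
    simp only [Finset.mem_image] at hy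
    obtain ⟨x, hx, rfl⟩ := hy
    have : Equiv.subtypeCongr e' f' x = (e' ⟨x, hx⟩ : α) := by
      simp [Equiv.subtypeCongr, hx]
    rw [this]
    exact (e' ⟨x, hx⟩).2
  · rw [Finset.card_image_of_injective _ (Equiv.injective _), h]

lemma card_of_mem_Sn {u n : ℕ} {S : Finset (Fin u)} (h : S ∈ Sn u n) : S.card = n :=
  (Finset.mem_powersetCard.1 h).2

lemma image_mem_Sn {u n : ℕ} {S : Finset (Fin u)} (h : S ∈ Sn u n) (π : Equiv.Perm (Fin u)) :
    S.image π ∈ Sn u n := by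
  rw [Sn, Finset.mem_powersetCard]
  exact ⟨Finset.subset_univ _, by
    rw [Finset.card_image_of_injective _ π.injective]; exact card_of_mem_Sn h⟩

lemma fib_const {u n : ℕ} {S T T' : Finset (Fin u)} (hS : S.card = n)
    (hT : T ∈ Sn u n) (hT' : T' ∈ Sn u n) :
    (Finset.univ.filter fun π : Equiv.Perm (Fin u) => S.image π = T).card
      = (Finset.univ.filter fun π : Equiv.Perm (Fin u) => S.image π = T').card := by
  obtain ⟨σ, hσ⟩ := exists_perm_image ((card_of_mem_Sn hT).trans (card_of_mem_Sn hT').symm)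
  have hσ' : T'.image ⇑σ⁻¹ = T := by
    rw [← hσ, Finset.image_image]
    have : (⇑σ⁻¹ ∘ ⇑σ) = id := by funext x; simp
    rw [this, Finset.image_id]
  apply Finset.card_bij' (fun π _ => σ * π) (fun π _ => σ⁻¹ * π)
  · intro π hπ
    simp only [Finset.mem_filter, Finset.mem_univ, true_and] at hπ ⊢
    have : ⇑(σ * π) = ⇑σ ∘ ⇑π := by funext x; rfl
    rw [this, ← Finset.image_image, hπ, hσ]
  · intro π hπ
    simp only [Finset.mem_filter, Finset.mem_univ, true_and] at hπ ⊢
    have : ⇑(σ⁻¹ * π) = ⇑σ⁻¹ ∘ ⇑π := by funext x; rfl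
    rw [this, ← Finset.image_image, hπ, hσ']
  · intro π _; simp [← mul_assoc]
  · intro π _; simp [← mul_assoc]

lemma perm_card_eq {u n : ℕ} {S T : Finset (Fin u)} (hS : S.card = n) (hT : T ∈ Sn u n) :
    Fintype.card (Equiv.Perm (Fin u))
      = (Sn u n).card * (Finset.univ.filter fun π : Equiv.Perm (Fin u) => S.image π = T).card := by
  have hfib := Finset.card_eq_sum_card_fiberwise
    (f := fun π : Equiv.Perm (Fin u) => S.image π) (s := Finset.univ) (t := Sn u n)
    (fun π _ => image_mem_Sn (by rw [Sn, Finset.mem_powersetCard]; exact ⟨Finset.subset_univ S, hS⟩) π)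
  rw [← Finset.card_univ, hfib]
  rw [Finset.sum_congr rfl (fun T' hT' => fib_const hS hT' hT), Finset.sum_const, smul_eq_mul]

lemma avg {u m n d : ℕ} (hm : 0 < m) (R : Finset (Finset (Fin u))) (hR : R ⊆ Sn u n) :
    ∃ h : Fin u → Fin m,
      Mc u m n d * R.card ≤ (Sn u n).card * (R.filter fun S => cost h S ≤ d).card := by
  haveI : Nonempty (Fin m) := ⟨⟨0, hm⟩⟩
  obtain ⟨h₀, -, hh₀⟩ := Finset.exists_mem_eq_sup (Finset.univ : Finset (Fin u → Fin m))
    Finset.univ_nonempty (fun h => ((Sn u n).filter fun S => cost h S ≤ d).card)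
  set cov := (Sn u n).filter fun T => cost h₀ T ≤ d with hcov
  set N := (Sn u n).card with hN
  set P := Fintype.card (Equiv.Perm (Fin u)) with hP
  have hMc : Mc u m n d = cov.card := hh₀
  -- count for each S
  have claim1 : ∀ S ∈ R,
      N * (Finset.univ.filter fun π : Equiv.Perm (Fin u) => S.image ⇑π ∈ cov).card
        = cov.card * P := by
    intro S hS
    have hScard : S.card = n := card_of_mem_Sn (hR hS)
    have hsplit : (Finset.univ.filter fun π : Equiv.Perm (Fin u) => S.image ⇑π ∈ cov).card
        = ∑ T ∈ cov, (Finset.univ.filter fun π : Equiv.Perm (Fin u) => S.image ⇑π = T).card := by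
      rw [Finset.card_eq_sum_card_fiberwise
        (f := fun π : Equiv.Perm (Fin u) => S.image ⇑π) (t := cov)
        (s := Finset.univ.filter fun π : Equiv.Perm (Fin u) => S.image ⇑π ∈ cov)
        (fun π hπ => (Finset.mem_filter.1 hπ).2)]
      apply Finset.sum_congr rfl
      intro T hT
      congr 1
      ext π
      simp only [Finset.mem_filter, Finset.mem_univ, true_and]
      constructor
      · rintro ⟨h1, h2⟩; exact h2
      · rintro rfl; exact ⟨hT, rfl⟩
    rw [hsplit, Finset.mul_sum]
    rw [Finset.sum_congr rfl (fun T hT => (perm_card_eq hScard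
      (Finset.mem_of_mem_filter _ hT)).symm), Finset.sum_const, smul_eq_mul]
  -- double counting
  have claim2 : ∀ π : Equiv.Perm (Fin u),
      (R.filter fun S => cost (h₀ ∘ ⇑π) S ≤ d)
        = (R.filter fun S => S.image ⇑π ∈ cov) := by
    intro π
    apply Finset.filter_congr
    intro S hS
    rw [cost_comp_perm, hcov, Finset.mem_filter]
    simp only [iff_and_self]
    intro _
    exact image_mem_Sn (hR hS) π
  have hsum : ∑ π : Equiv.Perm (Fin u), (N * (R.filter fun S => cost (h₀ ∘ ⇑π) S ≤ d).card)
      = P * (cov.card * R.card) := by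
    have : ∀ π : Equiv.Perm (Fin u), (R.filter fun S => cost (h₀ ∘ ⇑π) S ≤ d).card
        = ∑ S ∈ R, if S.image ⇑π ∈ cov then 1 else 0 := by
      intro π; rw [claim2 π, Finset.card_filter]
    calc ∑ π : Equiv.Perm (Fin u), (N * (R.filter fun S => cost (h₀ ∘ ⇑π) S ≤ d).card)
        = N * ∑ π : Equiv.Perm (Fin u), ∑ S ∈ R, if S.image ⇑π ∈ cov then 1 else 0 := by
          rw [← Finset.mul_sum]; congr 1; exact Finset.sum_congr rfl fun π _ => by rw [this π]
      _ = N * ∑ S ∈ R, ∑ π : Equiv.Perm (Fin u), if S.image ⇑π ∈ cov then 1 else 0 := by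
          rw [Finset.sum_comm]
      _ = ∑ S ∈ R, N * (Finset.univ.filter fun π : Equiv.Perm (Fin u) => S.image ⇑π ∈ cov).card := by
          rw [Finset.mul_sum]
          exact Finset.sum_congr rfl fun S _ => by rw [Finset.card_filter]
      _ = ∑ S ∈ R, cov.card * P := Finset.sum_congr rfl claim1
      _ = R.card * (cov.card * P) := by rw [Finset.sum_const, smul_eq_mul]
      _ = P * (cov.card * R.card) := by ring
  have hne : (Finset.univ : Finset (Equiv.Perm (Fin u))).Nonempty := Finset.univ_nonempty
  obtain ⟨π, -, hπ⟩ := Finset.exists_le_of_sum_le hne (by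
    rw [Finset.sum_const, smul_eq_mul, Finset.card_univ, ← hP, ← hsum] :
      ∑ _π : Equiv.Perm (Fin u), cov.card * R.card
        ≤ ∑ π : Equiv.Perm (Fin u), (N * (R.filter fun S => cost (h₀ ∘ ⇑π) S ≤ d).card))
  exact ⟨h₀ ∘ ⇑π, by rw [hMc]; exact hπ⟩

lemma Mc_le_card {u m n d : ℕ} : Mc u m n d ≤ (Sn u n).card :=
  Finset.sup_le fun h _ => Finset.card_le_card (Finset.filter_subset _ _)

lemma greedy {u m n d : ℕ} (hm : 0 < m) (t : ℕ) :
    ∃ H : Finset (Fin u → Fin m), H.card ≤ t ∧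
      (Sn u n).card ^ t * ((Sn u n).filter fun S => ∀ h ∈ H, ¬ cost h S ≤ d).card
        ≤ ((Sn u n).card - Mc u m n d) ^ t * (Sn u n).card := by
  set N := (Sn u n).card with hN
  induction t with
  | zero =>
      refine ⟨∅, le_refl _, ?_⟩
      simp only [pow_zero, one_mul]
      exact Finset.card_le_card (Finset.filter_subset _ _)
  | succ t ih =>
      obtain ⟨H, hHcard, hH⟩ := ih
      set R := (Sn u n).filter fun S => ∀ h ∈ H, ¬ cost h S ≤ d with hR
      obtain ⟨h, hh⟩ := avg (n := n) (d := d) hm R (Finset.filter_subset _ _)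
      refine ⟨insert h H, (Finset.card_insert_le _ _).trans (by omega), ?_⟩
      have hsub : ((Sn u n).filter fun S => ∀ h' ∈ insert h H, ¬ cost h' S ≤ d)
          = R.filter fun S => ¬ cost h S ≤ d := by
        rw [hR, Finset.filter_filter]
        apply Finset.filter_congr
        intro S _
        simp only [Finset.mem_insert, forall_eq_or_imp]
        tauto
      rw [hsub]
      set a := (R.filter fun S => ¬ cost h S ≤ d).card with ha
      set b := (R.filter fun S => cost h S ≤ d).card with hb
      have hdecomp : a + b = R.card := by
        rw [ha, hb, add_comm]
        exact Finset.card_filter_add_card_filter_not _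
      have step : N * a ≤ (N - Mc u m n d) * R.card := by
        rw [Nat.sub_mul]
        apply Nat.le_sub_of_add_le
        calc N * a + Mc u m n d * R.card ≤ N * a + N * b := by
              exact Nat.add_le_add_left hh _
          _ = N * R.card := by rw [← hdecomp]; ring
      calc N ^ (t + 1) * a = N ^ t * (N * a) := by ring
        _ ≤ N ^ t * ((N - Mc u m n d) * R.card) := Nat.mul_le_mul_left _ step
        _ = (N - Mc u m n d) * (N ^ t * R.card) := by ring
        _ ≤ (N - Mc u m n d) * ((N - Mc u m n d) ^ t * N) := Nat.mul_le_mul_left _ hH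
        _ = (N - Mc u m n d) ^ (t + 1) * N := by ring

lemma exists_cost_le {u m n d : ℕ} (hm : 0 < m) (hn : 0 < n) (hdvd : m ∣ n)
    (hαd : n / m ≤ d) (S : Finset (Fin u)) (hS : S.card = n) :
    ∃ h : Fin u → Fin m, cost h S ≤ d := by
  set α := n / m with hα
  have hαm : α * m = n := Nat.div_mul_cancel hdvd
  have hα0 : 0 < α := by
    rcases Nat.eq_zero_or_pos α with h | h
    · rw [h] at hαm; omega
    · exact h
  set e := S.orderIsoOfFin hS with he
  set idx : Fin u → ℕ := fun x => if hx : x ∈ S then (e.symm ⟨x, hx⟩ : Fin n) else 0 with hidx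
  have hidxlt : ∀ x ∈ S, idx x < n := by
    intro x hx
    rw [hidx]
    simp only [dif_pos hx]
    exact (e.symm ⟨x, hx⟩).2
  refine ⟨fun x => ⟨idx x / α, ?_⟩, ?_⟩
  · rcases Classical.em (x ∈ S) with hx | hx
    · rw [Nat.div_lt_iff_lt_mul hα0, mul_comm]
      rw [hαm]
      exact hidxlt x hx
    · have : idx x = 0 := by rw [hidx]; simp [hx]
      rw [this]
      simpa [Nat.zero_div] using hm
  · apply Finset.sup_le
    intro k _
    refine le_trans ?_ hαd
    have hcard : (Finset.Ico (k.val * α) (k.val * α + α)).card = α := by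
      rw [Nat.card_Ico]; omega
    refine le_trans (Finset.card_le_card_of_injOn idx ?_ ?_) (le_of_eq hcard)
    · intro x hx
      rw [Finset.mem_coe, Finset.mem_filter] at hx
      have hxk : idx x / α = k.val := by
        have h2 := hx.2
        rw [Fin.mk.injEq] at h2  -- maybe needs ext
        exact h2
      rw [Finset.mem_coe, Finset.mem_Ico]
      constructor
      · calc k.val * α = idx x / α * α := by rw [hxk]
          _ ≤ idx x := Nat.div_mul_le_self _ _
      · have hmod := Nat.mod_lt (idx x) hα0
        calc idx x = idx x / α * α + idx x % α := by rw [mul_comm]; exact (Nat.div_add_mod _ _).symm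
          _ = k.val * α + idx x % α := by rw [hxk]
          _ < k.val * α + α := Nat.add_lt_add_left hmod _
    · intro x hx y hy hxy
      rw [Finset.coe_filter, Set.mem_setOf_eq] at hx hy
      have hxS := hx.1
      have hyS := hy.1
      rw [hidx] at hxy
      simp only [dif_pos hxS, dif_pos hyS] at hxy
      have : e.symm ⟨x, hxS⟩ = e.symm ⟨y, hyS⟩ := Fin.ext hxy
      have := e.symm.injective this
      exact Subtype.ext_iff.1 this

lemma Mc_pos {u m n d : ℕ} (hm : 0 < m) (hn : 0 < n) (hnu : n ≤ u) (hdvd : m ∣ n)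
    (hαd : n / m ≤ d) : 0 < Mc u m n d := by
  obtain ⟨S₀, -, hS₀⟩ := Finset.exists_subset_card_eq
    (show n ≤ (Finset.univ : Finset (Fin u)).card by simpa using hnu)
  obtain ⟨h, hh⟩ := exists_cost_le hm hn hdvd hαd S₀ hS₀
  have hmem : S₀ ∈ (Sn u n).filter fun S => cost h S ≤ d := by
    rw [Finset.mem_filter, Sn, Finset.mem_powersetCard]
    exact ⟨⟨Finset.subset_univ _, hS₀⟩, hh⟩
  calc 0 < ((Sn u n).filter fun S => cost h S ≤ d).card := Finset.card_pos.2 ⟨S₀, hmem⟩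
    _ ≤ Mc u m n d := Finset.le_sup (f := fun h : Fin u → Fin m => ((Sn u n).filter fun S => cost h S ≤ d).card) (Finset.mem_univ h)

lemma key_analytic (A p : ℝ) (hp0 : 0 < p) (hp1 : p < 1) (hA : 4 * Real.log 2 ≤ A) :
    A - Real.log 2 ≤ (A / p - 1) * (-Real.log (1 - p)) := by
  have h1p : (0:ℝ) < 1 - p := by linarith
  set L := -Real.log (1 - p) with hL
  have hl2 : (0.6931471803 : ℝ) < Real.log 2 := Real.log_two_gt_d9
  have hl2' : Real.log 2 < 0.6931471808 := Real.log_two_lt_d9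
  have hLp : p ≤ L := by
    have : 1 - p ≤ Real.exp (-p) := by
      have := Real.add_one_le_exp (-p); linarith
    have h2 := Real.log_le_log h1p this
    rw [Real.log_exp] at h2
    simp only [hL]; linarith
  have hApos : (0:ℝ) < A := by linarith
  have hgoal : (A - Real.log 2) * p ≤ (A - p) * L := by
    rcases le_or_gt p (1/2) with hcase | hcase
    · -- L ≤ log 2
      have hLle : L ≤ Real.log 2 := by
        have h12 : (1:ℝ)/2 ≤ 1 - p := by linarith
        have := Real.log_le_log (by norm_num : (0:ℝ) < 1/2) h12
        rw [show (1:ℝ)/2 = 2⁻¹ by norm_num, Real.log_inv] at this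
        simp only [hL]; linarith
      nlinarith [mul_nonneg hApos.le (sub_nonneg.2 hLp), mul_le_mul_of_nonneg_left hLle hp0.le]
    · -- L ≥ 2 log 2 * p
      have hLge : 2 * Real.log 2 * p ≤ L := by
      -- 1 - p ≤ exp (-(2 log 2) p)
        have hexp : 1 - p ≤ Real.exp (-(2 * Real.log 2 * p)) := by
          have htangent : Real.exp (-Real.log 2) * ((-(2 * Real.log 2 * p)) - (-Real.log 2) + 1)
              ≤ Real.exp (-(2 * Real.log 2 * p)) := by
            have h := Real.add_one_le_exp ((-(2 * Real.log 2 * p)) - (-Real.log 2))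
            calc Real.exp (-Real.log 2) * ((-(2 * Real.log 2 * p)) - (-Real.log 2) + 1)
                ≤ Real.exp (-Real.log 2) * Real.exp ((-(2 * Real.log 2 * p)) - (-Real.log 2)) := by
                  apply mul_le_mul_of_nonneg_left _ (Real.exp_pos _).le
                  linarith
              _ = Real.exp (-(2 * Real.log 2 * p)) := by rw [← Real.exp_add]; ring_nf
          have hexplog : Real.exp (-Real.log 2) = 1/2 := by
            rw [Real.exp_neg, Real.exp_log (by norm_num : (0:ℝ) < 2)]; norm_num
          rw [hexplog] at htangent
          nlinarith
        have h2 := Real.log_le_log h1p hexp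
        rw [Real.log_exp] at h2
        simp only [hL]; linarith
      have hAp : p < A := by linarith
      have hfact : (A - p) * (2 * Real.log 2 * p) ≤ (A - p) * L :=
        mul_le_mul_of_nonneg_left hLge (by linarith)
      nlinarith [mul_pos hp0 (sub_pos.2 hAp)]
  have hrw : A / p - 1 = (A - p) / p := by field_simp
  rw [hrw, div_mul_eq_mul_div, le_div_iff₀ hp0]
  linarith [hgoal]

/-- **General bounds on the minimal family size** (Corollary 3.5): every `c`-ideal family
has cardinality at least `C(u,n)/M_c = 1/p`, and some `c`-ideal family has cardinality at
most `(C(u,n)/M_c) · n · ln u = (n · ln u)/p`, where `p := M_c / C(u,n)`. -/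
theorem general_bounds_Hc (u m n d : ℕ) (hu : 0 < u) (hm : 2 ≤ m) (hn : 0 < n)
    (hmn : m ≤ n) (hnu : n ^ 2 ≤ u) (hdvd : m ∣ n) (hαd : n / m ≤ d) :
    (∀ H : Finset (Fin u → Fin m), IsIdealFamily u m n d H →
      (Nat.choose u n : ℝ) / (Mc u m n d : ℝ) ≤ H.card) ∧
    (∃ H : Finset (Fin u → Fin m), IsIdealFamily u m n d H ∧
      (H.card : ℝ) ≤ (Nat.choose u n : ℝ) / (Mc u m n d : ℝ) * n * Real.log u) := by
  have hm0 : 0 < m := by omega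
  have hn2 : 2 ≤ n := le_trans hm hmn
  have hnu' : n ≤ u := le_trans (by nlinarith) hnu
  have hu4 : 4 ≤ u := le_trans (by nlinarith) hnu
  have hN : (Sn u n).card = u.choose n := by
    rw [Sn, Finset.card_powersetCard, Finset.card_univ, Fintype.card_fin]
  set N := u.choose n with hNdef
  have hMcpos : 0 < Mc u m n d := Mc_pos hm0 hn hnu' hdvd hαd
  have hMcN : Mc u m n d ≤ N := hN ▸ Mc_le_card
  have hNpos : 0 < N := lt_of_lt_of_le hMcpos hMcN
  have hl2 : (0.6931471803 : ℝ) < Real.log 2 := Real.log_two_gt_d9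
  have hlogu : 2 * Real.log 2 ≤ Real.log u := by
    have h4 : Real.log 4 ≤ Real.log u :=
      Real.log_le_log (by norm_num) (by exact_mod_cast hu4)
    have : Real.log 4 = 2 * Real.log 2 := by
      rw [show (4:ℝ) = 2^2 by norm_num, Real.log_pow]; push_cast; ring
    linarith
  have hA4 : 4 * Real.log 2 ≤ (n : ℝ) * Real.log u := by
    have hn2' : (2:ℝ) ≤ (n:ℝ) := by exact_mod_cast hn2
    nlinarith
  constructor
  · -- lower bound
    intro H hH
    have hcover : Sn u n ⊆ H.biUnion fun h => (Sn u n).filter fun S => cost h S ≤ d := by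
      intro S hS
      obtain ⟨h, hhH, hc⟩ := hH S hS
      exact Finset.mem_biUnion.2 ⟨h, hhH, Finset.mem_filter.2 ⟨hS, hc⟩⟩
    have hcount : N ≤ H.card * Mc u m n d := by
      calc N = (Sn u n).card := hN.symm
        _ ≤ (H.biUnion fun h => (Sn u n).filter fun S => cost h S ≤ d).card :=
            Finset.card_le_card hcover
        _ ≤ ∑ h ∈ H, ((Sn u n).filter fun S => cost h S ≤ d).card := Finset.card_biUnion_le
        _ ≤ ∑ _h ∈ H, Mc u m n d := Finset.sum_le_sum fun h _ =>
            Finset.le_sup (f := fun h : Fin u → Fin m =>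
              ((Sn u n).filter fun S => cost h S ≤ d).card) (Finset.mem_univ h)
        _ = H.card * Mc u m n d := by rw [Finset.sum_const, smul_eq_mul]
    rw [div_le_iff₀ (by exact_mod_cast hMcpos)]
    exact_mod_cast hcount
  · -- upper bound
    set x : ℝ := (N : ℝ) / (Mc u m n d : ℝ) * n * Real.log u with hx
    have hxA : (n:ℝ) * Real.log u ≤ x := by
      rw [hx]
      have h1 : (1:ℝ) ≤ (N : ℝ) / (Mc u m n d : ℝ) := by
        rw [le_div_iff₀ (by exact_mod_cast hMcpos), one_mul]
        exact_mod_cast hMcN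
      nlinarith [mul_nonneg (by positivity : (0:ℝ) ≤ (n:ℝ))
        (Real.log_nonneg (by exact_mod_cast hu : (1:ℝ) ≤ (u:ℝ)))]
    have hxpos : (0:ℝ) ≤ x := le_trans (by nlinarith) hxA
    set t := ⌊x⌋₊ with ht
    obtain ⟨H, hHcard, hHbound⟩ := greedy (u := u) (n := n) (d := d) hm0 t
    rw [hN] at hHbound
    -- key numeric inequality
    have hkey : (N - Mc u m n d) ^ t * N < N ^ t := by
      have ht1 : 1 ≤ t := by
        rw [ht]
        apply Nat.le_floor
        push_cast
        nlinarith
      rcases eq_or_lt_of_le hMcN with heq | hlt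
      · rw [heq]
        simp only [Nat.sub_self]
        rw [zero_pow (by omega)]
        simpa using (Nat.pow_pos hNpos : 0 < N ^ t) |>.trans_le (le_refl _) |>.trans_eq rfl
      · -- real argument
        have := hlt
        have hreal : ((N - Mc u m n d : ℕ) : ℝ) ^ t * (N:ℝ) < ((N:ℝ)) ^ t := by
          set a : ℝ := (N : ℝ) - (Mc u m n d : ℝ) with hadef
          set b : ℝ := (N : ℝ) with hbdef
          have hcast : ((N - Mc u m n d : ℕ) : ℝ) = a := by
            rw [hadef, Nat.cast_sub hMcN]
          rw [hcast]
          have ha0 : 0 < a := by rw [hadef]; have : (Mc u m n d : ℝ) < (N:ℝ) := by exact_mod_cast hlt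
                                 linarith
          have hb0 : (0:ℝ) < b := by rw [hbdef]; exact_mod_cast hNpos
          have hab : a < b := by
            rw [hadef, hbdef]
            have h' : (0:ℝ) < (Mc u m n d : ℝ) := by exact_mod_cast hMcpos
            linarith
          set p : ℝ := (Mc u m n d : ℝ) / b with hp
          have hp0 : 0 < p := by positivity
          have hp1 : p < 1 := by
            rw [hp, div_lt_one hb0, hbdef]; exact_mod_cast hlt
          have h1p : 1 - p = a / b := by
            rw [hp, hadef, hbdef]; field_simp
          have hL : -Real.log (1 - p) = Real.log (b / a) := by
            rw [h1p, ← Real.log_inv]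
            congr 1
            field_simp
          have hkeyineq := key_analytic ((n:ℝ) * Real.log u) p hp0 hp1 hA4
          rw [hL] at hkeyineq
          have hLpos : 0 < Real.log (b / a) :=
            Real.log_pos (by rw [lt_div_iff₀ ha0, one_mul]; exact hab)
          have htx : ((n:ℝ) * Real.log u) / p - 1 < (t : ℝ) := by
            have hfloor := Nat.sub_one_lt_floor x
            have hxp : x = ((n:ℝ) * Real.log u) / p := by
              rw [hx, hp, hbdef]
              field_simp
            rw [← ht] at hfloor
            linarith [hxp ▸ hfloor]
          have hlogN : Real.log b ≤ (n:ℝ) * Real.log u - Real.log 2 := by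
            have h2N : 2 * N ≤ u ^ n := by
              calc 2 * N ≤ n.factorial * N := by
                    apply Nat.mul_le_mul_right
                    calc 2 = Nat.factorial 2 := rfl
                      _ ≤ n.factorial := Nat.factorial_le hn2
                _ = u.descFactorial n := (Nat.descFactorial_eq_factorial_mul_choose u n).symm
                _ ≤ u ^ n := Nat.descFactorial_le_pow u n
            have h2N' : (b:ℝ) ≤ (u:ℝ) ^ n / 2 := by
              rw [le_div_iff₀ (by norm_num : (0:ℝ) < 2)]
              have : ((2 * N : ℕ) : ℝ) ≤ ((u ^ n : ℕ) : ℝ) := by exact_mod_cast h2N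
              push_cast at this
              rw [hbdef]; linarith
            calc Real.log b ≤ Real.log ((u:ℝ) ^ n / 2) := Real.log_le_log hb0 h2N'
              _ = (n:ℝ) * Real.log u - Real.log 2 := by
                  rw [Real.log_div (by positivity) (by norm_num), Real.log_pow]
          have hmain : Real.log b < (t:ℝ) * Real.log (b / a) := by
            calc Real.log b ≤ (n:ℝ) * Real.log u - Real.log 2 := hlogN
              _ ≤ (((n:ℝ) * Real.log u) / p - 1) * Real.log (b / a) := hkeyineq
              _ < (t:ℝ) * Real.log (b / a) := by
                  exact mul_lt_mul_of_pos_right htx hLpos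
          have hblt : b < (b / a) ^ t := by
            rw [← Real.log_lt_log_iff hb0 (by positivity)]
            rwa [Real.log_pow]
          calc a ^ t * b < a ^ t * (b / a) ^ t := by
                apply mul_lt_mul_of_pos_left hblt (by positivity)
            _ = b ^ t := by
                rw [← mul_pow]
                congr 1
                field_simp
        exact_mod_cast hreal
    -- uncovered is empty
    have hrzero : ((Sn u n).filter fun S => ∀ h ∈ H, ¬ cost h S ≤ d).card = 0 := by
      by_contra hne
      have h1 : 1 ≤ ((Sn u n).filter fun S => ∀ h ∈ H, ¬ cost h S ≤ d).card := by omega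
      have : N ^ t * 1 ≤ N ^ t * ((Sn u n).filter fun S => ∀ h ∈ H, ¬ cost h S ≤ d).card :=
        Nat.mul_le_mul_left _ h1
      have h2 : N ^ t ≤ (N - Mc u m n d) ^ t * N := by
        calc N ^ t = N ^ t * 1 := by ring
          _ ≤ N ^ t * ((Sn u n).filter fun S => ∀ h ∈ H, ¬ cost h S ≤ d).card := this
          _ ≤ (N - Mc u m n d) ^ t * N := hHbound
      omega
    refine ⟨H, ?_, ?_⟩
    · intro S hS
      by_contra hc
      push_neg at hc
      have : S ∈ (Sn u n).filter fun S => ∀ h ∈ H, ¬ cost h S ≤ d :=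
        Finset.mem_filter.2 ⟨hS, fun h hh => not_le.2 (hc h hh)⟩
      rw [Finset.card_eq_zero] at hrzero
      rw [hrzero] at this
      exact absurd this (Finset.notMem_empty S)
    · calc (H.card : ℝ) ≤ (t : ℝ) := by exact_mod_cast hHcard
        _ ≤ x := Nat.floor_le hxpos
        _ = (N : ℝ) / (Mc u m n d : ℝ) * n * Real.log u := hx
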